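/- Let $(X,d,m)$ be a doubling metric measure space ($m(B_{2r}) \le 2^n m(B_r)$) whose heat kernel satisfies, for all $x,y$ and $t>0$, $p(x,y,t) \le \frac{C(n)}{[m(B(x,r_1)) m(B(y,r_2))]^{1/2}} \exp\{\alpha^2 t + \alpha(\phi(x)-\phi(y)) + |\alpha|(r_1+r_2)\}$ for every $1$-Lipschitz $\phi$, every $\alpha \in \mathbb{R}$, and all $r_1, r_2 > 0$ with $t \ge \frac14(r_1^2+r_2^2)$. Then, choosing $\phi(\cdot) = d(x,\cdot)$, $\alpha = (\phi(y)-\phi(x))/(2t)$, and $r_1 = r_2 = t/(\sqrt{t}+d(x,y))$, one obtains the Gaussian bound $p(x,y,t) \le C(n)\, m(B(y,\sqrt{t}))^{-1} \exp(-d(x,y)^2/(5t))$. -/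

import Mathlib

open MeasureTheory Metric Set Real Filter

lemma doubling_pow {X : Type*} [MetricSpace X] [MeasurableSpace X]
    (m : Measure X) (n : ℕ)
    (hdouble : ∀ (x : X) (r : ℝ), 0 < r →
      m (closedBall x (2 * r)) ≤ 2 ^ n * m (closedBall x r)) :
    ∀ (k : ℕ) (z : X) (r : ℝ), 0 < r →
      m (closedBall z (2 ^ k * r)) ≤ 2 ^ (n * k) * m (closedBall z r) := by
  intro k
  induction k with
  | zero => intro z r hr; simp
  | succ k ih =>
    intro z r hr
    have h1 : (2:ℝ) ^ (k+1) * r = 2 * (2 ^ k * r) := by ring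
    rw [h1]
    calc m (closedBall z (2 * (2 ^ k * r)))
        ≤ 2 ^ n * m (closedBall z (2 ^ k * r)) := hdouble z _ (by positivity)
      _ ≤ 2 ^ n * (2 ^ (n * k) * m (closedBall z r)) := mul_le_mul_right (ih z r hr) _
      _ = 2 ^ (n * (k+1)) * m (closedBall z r) := by
          rw [← mul_assoc, ← pow_add, Nat.mul_succ, Nat.add_comm]

lemma doubling_cont {X : Type*} [MetricSpace X] [MeasurableSpace X]
    (m : Measure X) (n : ℕ)
    (hdouble : ∀ (x : X) (r : ℝ), 0 < r →
      m (closedBall x (2 * r)) ≤ 2 ^ n * m (closedBall x r))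
    (hballs : ∀ (x : X) (r : ℝ), 0 < r →
      0 < m (closedBall x r) ∧ m (closedBall x r) < ⊤)
    (z : X) (r R : ℝ) (hr : 0 < r) (hrR : r ≤ R) :
    (m (closedBall z R)).toReal ≤ (2 * R / r) ^ n * (m (closedBall z r)).toReal := by
  have hR : 0 < R := hr.trans_le hrR
  have hq1 : 1 ≤ R / r := (one_le_div hr).2 hrR
  have hex : ∃ k : ℕ, R / r < 2 ^ k := pow_unbounded_of_one_lt _ one_lt_two
  classical
  set k := Nat.find hex with hk
  have hklt : R / r < 2 ^ k := Nat.find_spec hex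
  have hkpos : k ≠ 0 := by
    intro h
    rw [h] at hklt
    simp at hklt
    linarith
  have hkle : (2:ℝ) ^ (k-1) ≤ R / r := by
    by_contra h
    push_neg at h
    exact Nat.find_min hex (Nat.sub_lt (Nat.pos_of_ne_zero hkpos) one_pos) h
  have h2k : (2:ℝ) ^ k ≤ 2 * (R / r) := by
    have : (2:ℝ) ^ k = 2 * 2 ^ (k-1) := by
      rw [← pow_succ']
      congr 1
      omega
    rw [this]
    linarith
  have hsub : closedBall z R ⊆ closedBall z (2 ^ k * r) := by
    apply closedBall_subset_closedBall
    rw [div_lt_iff₀ hr] at hklt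
    linarith
  have h1 : m (closedBall z R) ≤ 2 ^ (n * k) * m (closedBall z r) :=
    (measure_mono hsub).trans (doubling_pow m n hdouble k z r hr)
  have hfin : (2:ENNReal) ^ (n * k) * m (closedBall z r) ≠ ⊤ :=
    ENNReal.mul_ne_top (by simp) (hballs z r hr).2.ne
  have h2 := ENNReal.toReal_mono hfin h1
  rw [ENNReal.toReal_mul] at h2
  calc (m (closedBall z R)).toReal
      ≤ ((2:ENNReal) ^ (n*k)).toReal * (m (closedBall z r)).toReal := h2
    _ = (2:ℝ) ^ (n*k) * (m (closedBall z r)).toReal := by norm_num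
    _ ≤ (2 * R / r) ^ n * (m (closedBall z r)).toReal := by
        have hpow : (2:ℝ) ^ (n*k) ≤ (2 * R / r) ^ n := by
          calc (2:ℝ) ^ (n*k) = ((2:ℝ)^k)^n := by rw [← pow_mul, Nat.mul_comm]
            _ ≤ (2 * (R/r))^n := pow_le_pow_left₀ (by positivity) h2k n
            _ = (2 * R / r)^n := by rw [mul_div_assoc]
        exact mul_le_mul_of_nonneg_right hpow ENNReal.toReal_nonneg

lemma sqrt_le_self' {w : ℝ} (h : 1 ≤ w) : Real.sqrt w ≤ w := by
  have h2 := Real.sqrt_le_sqrt (show w ≤ w^2 by nlinarith)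
  rwa [Real.sqrt_sq (by linarith)] at h2

set_option maxHeartbeats 800000 in
/-- From Davies' off-diagonal bound (valid for every 1-Lipschitz `φ`, every
`α ∈ ℝ` and radii `r₁, r₂` with `t ≥ (r₁² + r₂²)/4`), together with doubling,
one deduces the Gaussian upper bound
`p(x,y,t) ≤ C(n) m(B(y,√t))⁻¹ exp(-d(x,y)²/(5t))`. -/
theorem stmt9 {X : Type*} [MetricSpace X] [MeasurableSpace X]
    (m : Measure X) (n : ℕ) (p : X → X → ℝ → ℝ) (C₀ : ℝ) (hC₀ : 0 < C₀)
    (hdouble : ∀ (x : X) (r : ℝ), 0 < r →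
      m (closedBall x (2 * r)) ≤ 2 ^ n * m (closedBall x r))
    (hballs : ∀ (x : X) (r : ℝ), 0 < r →
      0 < m (closedBall x r) ∧ m (closedBall x r) < ⊤)
    (hoff : ∀ (x y : X) (t : ℝ), 0 < t → ∀ φ : X → ℝ, LipschitzWith 1 φ →
      ∀ (α r₁ r₂ : ℝ), 0 < r₁ → 0 < r₂ → (r₁ ^ 2 + r₂ ^ 2) / 4 ≤ t →
      p x y t ≤ C₀ /
          Real.sqrt ((m (closedBall x r₁)).toReal * (m (closedBall y r₂)).toReal)
        * Real.exp (α ^ 2 * t + α * (φ x - φ y) + |α| * (r₁ + r₂))) :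
    ∃ C : ℝ, 0 < C ∧ ∀ (x y : X) (t : ℝ), 0 < t →
      p x y t ≤ C * ((m (closedBall y (Real.sqrt t))).toReal)⁻¹
        * Real.exp (-(dist x y) ^ 2 / (5 * t)) := by
  refine ⟨C₀ * 4 ^ n * Real.exp (1 + 45 * (n:ℝ) ^ 2), by positivity, ?_⟩
  intro x y t ht
  set d := dist x y with hd
  set s := Real.sqrt t with hs
  have hs0 : 0 < s := Real.sqrt_pos.2 ht
  have hts : s * s = t := Real.mul_self_sqrt ht.le
  have hd0 : 0 ≤ d := dist_nonneg
  set r := t / (s + d) with hr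
  have hsd : 0 < s + d := by linarith
  have hr0 : 0 < r := div_pos ht hsd
  have hrs : r ≤ s := by
    rw [hr, div_le_iff₀ hsd]
    nlinarith
  -- apply the off-diagonal bound
  have hφ : LipschitzWith 1 (fun z => dist x z) := LipschitzWith.dist_right x
  have hcond : (r ^ 2 + r ^ 2) / 4 ≤ t := by nlinarith
  have hdav := hoff x y t ht _ hφ (d / (2*t)) r r hr0 hr0 hcond
  simp only [dist_self] at hdav
  -- the exponent
  have habs : |d / (2*t)| = d / (2*t) := abs_of_nonneg (by positivity)
  have hexparg : (d / (2*t)) ^ 2 * t + d / (2*t) * (0 - d) + |d / (2*t)| * (r + r)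
      ≤ 1 - d ^ 2 / (4*t) := by
    rw [habs, hr]
    have h1 : (d / (2*t)) ^ 2 * t + d / (2*t) * (0 - d) = - (d^2/(4*t)) := by
      field_simp
      ring
    have h2 : d / (2*t) * (t/(s+d) + t/(s+d)) = d / (s+d) := by
      field_simp
      ring
    rw [h1, h2]
    have h3 : d / (s+d) ≤ 1 := by
      rw [div_le_one hsd]; linarith
    linarith
  -- measures
  set a := (m (closedBall x r)).toReal with ha
  set b := (m (closedBall y r)).toReal with hb
  set M := (m (closedBall y s)).toReal with hM
  have ha0 : 0 < a := ENNReal.toReal_pos (hballs x r hr0).1.ne' (hballs x r hr0).2.ne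
  have hb0 : 0 < b := ENNReal.toReal_pos (hballs y r hr0).1.ne' (hballs y r hr0).2.ne
  have hM0 : 0 < M := ENNReal.toReal_pos (hballs y s hs0).1.ne' (hballs y s hs0).2.ne
  set u := d / s with hu
  have hu0 : 0 ≤ u := by positivity
  -- doubling comparisons
  have hBy : M ≤ (2 * (1+u)) ^ n * b := by
    have := doubling_cont m n hdouble hballs y r s hr0 hrs
    have hq : 2 * s / r = 2 * (1+u) := by
      rw [hr, hu, ← hts]
      field_simp
    rw [hq] at this
    exact this
  have hsub : closedBall y s ⊆ closedBall x (s + d) := by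
    intro z hz
    simp only [mem_closedBall] at hz ⊢
    calc dist z x ≤ dist z y + dist y x := dist_triangle z y x
      _ ≤ s + d := by rw [dist_comm y x, ← hd]; linarith
  have hBx : M ≤ (2 * (1+u)^2) ^ n * a := by
    have hmono : M ≤ (m (closedBall x (s+d))).toReal := by
      apply ENNReal.toReal_mono (hballs x (s+d) hsd).2.ne (measure_mono hsub)
    have hrsd : r ≤ s + d := hrs.trans (by linarith)
    have hdc := doubling_cont m n hdouble hballs x r (s+d) hr0 hrsd
    have hq : 2 * (s+d) / r = 2 * (1+u)^2 := by
      rw [hr, hu, ← hts]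
      field_simp
    rw [hq] at hdc
    exact hmono.trans hdc
  -- bound the prefactor
  have hA1 : (1:ℝ) ≤ (2 * (1+u)^2) ^ n := one_le_pow₀ (by nlinarith)
  have hB1 : (1:ℝ) ≤ (2 * (1+u)) ^ n := one_le_pow₀ (by nlinarith)
  have hpre : C₀ / Real.sqrt (a * b) ≤ C₀ * ((2 * (1+u)^2) ^ n * (2 * (1+u)) ^ n) / M := by
    rw [div_le_div_iff₀ (Real.sqrt_pos.2 (by positivity)) hM0]
    have hM' : M ≤ (2 * (1+u)^2) ^ n * (2 * (1+u)) ^ n * Real.sqrt (a*b) := by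
      have h1 : Real.sqrt (a*b) = Real.sqrt a * Real.sqrt b := Real.sqrt_mul ha0.le b
      have h2 : M = Real.sqrt M * Real.sqrt M := (Real.mul_self_sqrt hM0.le).symm
      have h3 : Real.sqrt M ≤ Real.sqrt ((2 * (1+u)^2) ^ n) * Real.sqrt a := by
        rw [← Real.sqrt_mul (by positivity)]
        exact Real.sqrt_le_sqrt hBx
      have h4 : Real.sqrt M ≤ Real.sqrt ((2 * (1+u)) ^ n) * Real.sqrt b := by
        rw [← Real.sqrt_mul (by positivity)]
        exact Real.sqrt_le_sqrt hBy
      have h5 : Real.sqrt ((2 * (1+u)^2) ^ n) ≤ (2 * (1+u)^2) ^ n := sqrt_le_self' hA1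
      have h6 : Real.sqrt ((2 * (1+u)) ^ n) ≤ (2 * (1+u)) ^ n := sqrt_le_self' hB1
      calc M = Real.sqrt M * Real.sqrt M := h2
        _ ≤ (Real.sqrt ((2 * (1+u)^2) ^ n) * Real.sqrt a) *
              (Real.sqrt ((2 * (1+u)) ^ n) * Real.sqrt b) := by
            apply mul_le_mul h3 h4 (Real.sqrt_nonneg M) (by positivity)
        _ ≤ ((2 * (1+u)^2) ^ n * Real.sqrt a) * ((2 * (1+u)) ^ n * Real.sqrt b) := by
            apply mul_le_mul
            · exact mul_le_mul_of_nonneg_right h5 (Real.sqrt_nonneg a)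
            · exact mul_le_mul_of_nonneg_right h6 (Real.sqrt_nonneg b)
            · positivity
            · positivity
        _ = (2 * (1+u)^2) ^ n * (2 * (1+u)) ^ n * Real.sqrt (a*b) := by
            rw [h1]; ring
    calc C₀ * M ≤ C₀ * ((2 * (1+u)^2) ^ n * (2 * (1+u)) ^ n * Real.sqrt (a*b)) :=
          mul_le_mul_of_nonneg_left hM' hC₀.le
      _ = C₀ * ((2 * (1+u)^2) ^ n * (2 * (1+u)) ^ n) * Real.sqrt (a*b) := by ring
  -- combine
  have hds : d = u * s := by rw [hu]; field_simp
  have hd2t : d ^ 2 / t = u ^ 2 := by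
    rw [hds, ← hts]; field_simp
  have hfinal : C₀ * ((2 * (1+u)^2) ^ n * (2 * (1+u)) ^ n) / M * Real.exp (1 - d^2/(4*t))
      ≤ C₀ * 4 ^ n * Real.exp (1 + 45 * (n:ℝ)^2) * M⁻¹ * Real.exp (-d^2/(5*t)) := by
    have hpoly : ((2 * (1+u)^2) ^ n * (2 * (1+u)) ^ n) * Real.exp (1 - d^2/(4*t))
        ≤ 4 ^ n * (Real.exp (1 + 45 * (n:ℝ)^2) * Real.exp (-d^2/(5*t))) := by
      have h1 : (2 * (1+u)^2) ^ n * (2 * (1+u)) ^ n = 4 ^ n * ((1+u) ^ (3*n)) := by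
        calc (2 * (1+u)^2) ^ n * (2 * (1+u)) ^ n = (2 * (1+u)^2 * (2 * (1+u))) ^ n :=
              (mul_pow _ _ n).symm
          _ = (4 * (1+u)^3) ^ n := by ring_nf
          _ = 4 ^ n * ((1+u)^3) ^ n := mul_pow _ _ n
          _ = 4 ^ n * (1+u) ^ (3*n) := by rw [← pow_mul, Nat.mul_comm]
      rw [h1]
      have h2 : (1+u) ^ (3*n) ≤ Real.exp (3 * n * u) := by
        calc (1+u) ^ (3*n) ≤ (Real.exp u) ^ (3*n) := by
              apply pow_le_pow_left₀ (by linarith)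
              linarith [Real.add_one_le_exp u]
          _ = Real.exp (3 * n * u) := by
              rw [← Real.exp_nat_mul]
              congr 1
              push_cast
              ring
      have h3 : 3 * (n:ℝ) * u + (1 - d^2/(4*t)) ≤ (1 + 45 * (n:ℝ)^2) + (-d^2/(5*t)) := by
        have e4 : d^2/(4*t) = u^2/4 := by rw [← hd2t]; ring
        have e5 : d^2/(5*t) = u^2/5 := by rw [← hd2t]; ring
        rw [e4, neg_div, e5]
        nlinarith [sq_nonneg (u - 30*(n:ℝ))]
      calc 4 ^ n * (1+u) ^ (3*n) * Real.exp (1 - d^2/(4*t))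
          ≤ 4 ^ n * Real.exp (3 * n * u) * Real.exp (1 - d^2/(4*t)) := by
            apply mul_le_mul_of_nonneg_right _ (Real.exp_nonneg _)
            exact mul_le_mul_of_nonneg_left h2 (by positivity)
        _ = 4 ^ n * Real.exp (3 * (n:ℝ) * u + (1 - d^2/(4*t))) := by
            rw [Real.exp_add]; ring
        _ ≤ 4 ^ n * Real.exp ((1 + 45 * (n:ℝ)^2) + (-d^2/(5*t))) := by
            apply mul_le_mul_of_nonneg_left (Real.exp_le_exp.2 h3) (by positivity)
        _ = 4 ^ n * (Real.exp (1 + 45 * (n:ℝ)^2) * Real.exp (-d^2/(5*t))) := by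
            rw [Real.exp_add]
    calc C₀ * ((2 * (1+u)^2) ^ n * (2 * (1+u)) ^ n) / M * Real.exp (1 - d^2/(4*t))
        = C₀ * M⁻¹ * (((2 * (1+u)^2) ^ n * (2 * (1+u)) ^ n) * Real.exp (1 - d^2/(4*t))) := by
          ring
      _ ≤ C₀ * M⁻¹ * (4 ^ n * (Real.exp (1 + 45 * (n:ℝ)^2) * Real.exp (-d^2/(5*t)))) := by
          apply mul_le_mul_of_nonneg_left hpoly (by positivity)
      _ = C₀ * 4 ^ n * Real.exp (1 + 45 * (n:ℝ)^2) * M⁻¹ * Real.exp (-d^2/(5*t)) := by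
          ring
  have h5t : -d^2/(5*t) = -(dist x y)^2/(5*t) := by rw [← hd]
  calc p x y t ≤ C₀ / Real.sqrt (a * b) *
        Real.exp ((d / (2*t)) ^ 2 * t + d / (2*t) * (0 - d) + |d / (2*t)| * (r + r)) := hdav
    _ ≤ C₀ * ((2 * (1+u)^2) ^ n * (2 * (1+u)) ^ n) / M * Real.exp (1 - d^2/(4*t)) := by
        apply mul_le_mul hpre (Real.exp_le_exp.2 hexparg) (Real.exp_nonneg _)
        positivity
    _ ≤ C₀ * 4 ^ n * Real.exp (1 + 45 * (n:ℝ)^2) * M⁻¹ * Real.exp (-d^2/(5*t)) := hfinal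
    _ = C₀ * 4 ^ n * Real.exp (1 + 45 * (n:ℝ)^2) * M⁻¹ * Real.exp (-(dist x y)^2/(5*t)) := by
        rw [h5t]
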